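/- Assume C is finite and Property 3 holds. Then every complex has at least one fate: for every x ∈ C there exists a finite multiset F of resting sets such that Fate(x, F) holds. -/

import Mathlib

/-- A reaction: a pair (reactants, products) of finite multisets of complexes. -/
abbrev Rxn (C : Type*) := Multiset C × Multiset C

variable {C : Type*}

/-- Edge of the fast-reaction digraph Γ: a fast (1,1) reaction ({x}, {y}) in R. -/
def FastEdge (R : Set (Rxn C)) (x y : C) : Prop :=
  ((({x} : Multiset C), ({y} : Multiset C)) : Rxn C) ∈ R

/-- Reachability along Γ. -/
def Reach (R : Set (Rxn C)) : C → C → Prop :=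
  Relation.ReflTransGen (FastEdge R)

/-- The strongly connected component of Γ containing x. -/
def scc (R : Set (Rxn C)) (x : C) : Set C :=
  {y | Reach R x y ∧ Reach R y x}

/-- Q is a resting set: an SCC of Γ all of whose outgoing fast reactions stay in Q. -/
def IsRestingSet (R : Set (Rxn C)) (Q : Set C) : Prop :=
  (∃ x, Q = scc R x) ∧
    ∀ r ∈ R, r.1.card = 1 → (∀ a ∈ r.1, a ∈ Q) → ∀ b ∈ r.2, b ∈ Q

/-- x is a resting complex: a member of some resting set. -/
def RestingComplex (R : Set (Rxn C)) (x : C) : Prop :=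
  ∃ Q, IsRestingSet R Q ∧ x ∈ Q

/-- One step of a fast transition: replace one occurrence of x by the products of a
fast reaction ({x}, P) ∈ R. -/
def FastStep (R : Set (Rxn C)) (M N : Multiset C) : Prop :=
  ∃ (x : C) (P M' : Multiset C),
    ((({x} : Multiset C), P) : Rxn C) ∈ R ∧ M = x ::ₘ M' ∧ N = P + M'

/-- A fast transition: finitely many fast steps. -/
def FastTransition (R : Set (Rxn C)) : Multiset C → Multiset C → Prop :=
  Relation.ReflTransGen (FastStep R)

/-- The fate predicate Fate(x, F), for x a complex and F a finite multiset of resting sets. -/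
inductive Fate (R : Set (Rxn C)) : C → Multiset (Set C) → Prop
  | resting (x : C) (h : IsRestingSet R (scc R x)) :
      Fate R x {scc R x}
  | step (x a : C) (l : List (C × Multiset (Set C)))
      (hnr : ¬ IsRestingSet R (scc R x))
      (ha : a ∈ scc R x)
      (hr : ((({a} : Multiset C), (↑(l.map Prod.fst) : Multiset C)) : Rxn C) ∈ R)
      (hout : ∃ b ∈ l.map Prod.fst, b ∉ scc R x)
      (hf : ∀ p ∈ l, Fate R p.1 p.2) :
      Fate R x (l.map Prod.snd).sum

/-- B ~ F : the multiset B of complexes represents the multiset F of resting sets,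
i.e. there is a bijective matching pairing each b ∈ B with a Q ∈ F with b ∈ Q. -/
def Represents (B : Multiset C) (F : Multiset (Set C)) : Prop :=
  Multiset.Rel (fun b Q => b ∈ Q) B F

/-- F is a fate of the multiset P of complexes: F = F_1 + ... + F_n where
P = {b_1, ..., b_n} and Fate(b_i, F_i) for each i. -/
def FateM (R : Set (Rxn C)) (P : Multiset C) (F : Multiset (Set C)) : Prop :=
  ∃ l : List (C × Multiset (Set C)),
    P = (↑(l.map Prod.fst) : Multiset C) ∧
    F = (l.map Prod.snd).sum ∧
    ∀ p ∈ l, Fate R p.1 p.2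

/-- The condensed reactions: for each slow reaction ({a₁, a₂}, P) ∈ R and each fate F
of P, the condensed reaction ({SCC(a₁), SCC(a₂)}, F). -/
def IsCondensed (R : Set (Rxn C)) (Ahat Bhat : Multiset (Set C)) : Prop :=
  ∃ (a1 a2 : C) (P : Multiset C),
    ((({a1, a2} : Multiset C), P) : Rxn C) ∈ R ∧
    Ahat = ({scc R a1, scc R a2} : Multiset (Set C)) ∧
    FateM R P Bhat

/-- Every reaction in R is fast (unimolecular) or slow (bimolecular). -/
def FastOrSlow (R : Set (Rxn C)) : Prop :=
  ∀ r ∈ R, r.1.card = 1 ∨ r.1.card = 2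

/-- Reactants and products of every reaction are nonempty. -/
def NonemptyRxns (R : Set (Rxn C)) : Prop :=
  ∀ r ∈ R, r.1 ≠ 0 ∧ r.2 ≠ 0

/-- Property 3: every finite cyclic sequence of fast reactions, in which each reaction
consumes a product of the previous one (cyclically), consists of (1,1) reactions only. -/
def Prop3 (R : Set (Rxn C)) : Prop :=
  ∀ (n : ℕ) (hn : 0 < n) (r : Fin n → Rxn C),
    (∀ i, r i ∈ R ∧ (r i).1.card = 1) →
    (∀ i : Fin n, ∀ a ∈ (r ⟨(i.1 + 1) % n, Nat.mod_lt _ hn⟩).1, a ∈ (r i).2) →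
    ∀ i, (r i).2.card = 1

/-- Property 4: both reactants of every slow reaction are resting complexes. -/
def Prop4 (R : Set (Rxn C)) : Prop :=
  ∀ r ∈ R, r.1.card = 2 → ∀ a ∈ r.1, RestingComplex R a

/-- A resting-state transition from {a₁, a₂} to B: a slow reaction ({a₁, a₂}, P) ∈ R
followed by a fast transition from P to B. -/
def RestingTransition (R : Set (Rxn C)) (a1 a2 : C) (B : Multiset C) : Prop :=
  ∃ P : Multiset C, ((({a1, a2} : Multiset C), P) : Rxn C) ∈ R ∧ FastTransition R P B

/-- One step of a sequence of detailed reactions: remove the reactants of some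
reaction in R from the current multiset and add its products. -/
def DetailedStep (R : Set (Rxn C)) (M N : Multiset C) : Prop :=
  ∃ r ∈ R, ∃ M' : Multiset C, M = r.1 + M' ∧ N = r.2 + M'

/-- One step of a sequence of condensed reactions: remove the reactant multiset of a
condensed reaction from the current multiset of resting sets and add its products. -/
def CondensedStep (R : Set (Rxn C)) (M N : Multiset (Set C)) : Prop :=
  ∃ Ahat Bhat M' : Multiset (Set C),
    IsCondensed R Ahat Bhat ∧ M = Ahat + M' ∧ N = Bhat + M'


section Aux

variable {C : Type*}

lemma mem_scc_self (R : Set (Rxn C)) (x : C) : x ∈ scc R x :=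
  ⟨Relation.ReflTransGen.refl, Relation.ReflTransGen.refl⟩

/-- A chain of fast reactions from `u` to `w`: each list element `(a, P)` records a fast
reaction `({a}, P) ∈ R`, whose product set contains the next chain vertex. -/
inductive ChainL (R : Set (Rxn C)) : C → C → List (C × Multiset C) → Prop
  | nil (u : C) : ChainL R u u []
  | cons {u v w : C} {P : Multiset C} {L : List (C × Multiset C)}
      (hr : ((({u} : Multiset C), P) : Rxn C) ∈ R) (hv : v ∈ P)
      (hc : ChainL R v w L) : ChainL R u w ((u, P) :: L)

lemma chain_append {R : Set (Rxn C)} {u v w : C} {L1 L2 : List (C × Multiset C)}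
    (h1 : ChainL R u v L1) (h2 : ChainL R v w L2) : ChainL R u w (L1 ++ L2) := by
  induction h1 with
  | nil => simpa using h2
  | cons hr hv hc ih => exact ChainL.cons hr hv (ih h2)

lemma chain_mem {R : Set (Rxn C)} {u w : C} {L : List (C × Multiset C)}
    (h : ChainL R u w L) : ∀ p ∈ L, ((({p.1} : Multiset C), p.2) : Rxn C) ∈ R := by
  induction h with
  | nil => intro p hp; simp at hp
  | cons hr hv hc ih =>
    intro p hp
    rcases List.mem_cons.mp hp with h' | h'
    · subst h'; exact hr
    · exact ih p h'

lemma chain_head {R : Set (Rxn C)} {u w : C} {L : List (C × Multiset C)}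
    (h : ChainL R u w L) : ∀ j (hj : j < L.length), j = 0 → (L.get ⟨j, hj⟩).1 = u := by
  cases h with
  | nil => intro j hj; simp at hj
  | cons hr hv hc => intro j hj hj0; subst hj0; rfl

lemma chain_consec {R : Set (Rxn C)} {u w : C} {L : List (C × Multiset C)}
    (h : ChainL R u w L) : ∀ i j (hi : i < L.length) (hj : j < L.length),
      j = i + 1 → (L.get ⟨j, hj⟩).1 ∈ (L.get ⟨i, hi⟩).2 := by
  induction h with
  | nil => intro i j hi; simp at hi
  | @cons u v w P L hr hv hc ih =>
    intro i j hi hj hji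
    subst hji
    cases i with
    | zero =>
      have hL : 0 < L.length := by simpa using hj
      have : (L.get ⟨0, hL⟩).1 = v := chain_head hc 0 hL rfl
      show (L.get ⟨0, _⟩).1 ∈ P
      rw [this]; exact hv
    | succ i =>
      exact ih i (i + 1) (by simpa using hi) (by simpa using hj) rfl

lemma chain_last {R : Set (Rxn C)} {u w : C} {L : List (C × Multiset C)}
    (h : ChainL R u w L) : ∀ i (hi : i < L.length), i + 1 = L.length →
      w ∈ (L.get ⟨i, hi⟩).2 := by
  induction h with
  | nil => intro i hi; simp at hi
  | @cons u v w P L hr hv hc ih =>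
    intro i hi hlen
    cases i with
    | zero =>
      have hL : L = [] := List.length_eq_zero_iff.mp (by simpa using hlen.symm)
      subst hL
      cases hc
      exact hv
    | succ i =>
      exact ih i (by simpa using hi) (by simpa using hlen)

/-- Consequence of Property 3: every reaction in a cyclic chain is (1,1). -/
lemma chain_cycle {R : Set (Rxn C)} (h3 : Prop3 R) {u : C} {L : List (C × Multiset C)}
    (hc : ChainL R u u L) (hne : L ≠ []) : ∀ p ∈ L, p.2.card = 1 := by
  have hn : 0 < L.length := List.length_pos_iff.mpr hne
  set r : Fin L.length → Rxn C :=
    fun i => ((({(L.get i).1} : Multiset C), (L.get i).2) : Rxn C) with hrdef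
  have h1 : ∀ i, r i ∈ R ∧ (r i).1.card = 1 := by
    intro i
    refine ⟨chain_mem hc _ (List.get_mem L i), by simp [hrdef]⟩
  have h2 : ∀ i : Fin L.length,
      ∀ a ∈ (r ⟨(i.1 + 1) % L.length, Nat.mod_lt _ hn⟩).1, a ∈ (r i).2 := by
    intro i a ha
    rw [hrdef] at ha ⊢
    simp only [Multiset.mem_singleton] at ha
    subst ha
    by_cases hlt : i.1 + 1 < L.length
    · exact chain_consec hc i.1 ((i.1 + 1) % L.length) i.isLt
        (Nat.mod_lt _ hn) (Nat.mod_eq_of_lt hlt)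
    · have heq : i.1 + 1 = L.length := by omega
      have h0 : (i.1 + 1) % L.length = 0 := by rw [heq]; exact Nat.mod_self _
      rw [chain_head hc _ (Nat.mod_lt _ hn) h0]
      exact chain_last hc i.1 i.isLt heq
  have hconc := h3 L.length hn r h1 h2
  intro p hp
  obtain ⟨i, hi⟩ := List.mem_iff_get.mp hp
  have := hconc i
  rw [hrdef] at this
  simp only at this
  rw [hi] at this
  exact this

lemma chain_of_reach {R : Set (Rxn C)} {u v : C} (h : Reach R u v) :
    ∃ L, ChainL R u v L := by
  induction h using Relation.ReflTransGen.head_induction_on with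
  | refl => exact ⟨[], ChainL.nil v⟩
  | head hedge _ ih =>
    obtain ⟨L, hL⟩ := ih
    exact ⟨_, ChainL.cons hedge (Multiset.mem_singleton_self _) hL⟩

lemma chain_reach {R : Set (Rxn C)} {u v : C} {L : List (C × Multiset C)}
    (h : ChainL R u v L) (h1 : ∀ p ∈ L, p.2.card = 1) : Reach R u v := by
  induction h with
  | nil => exact Relation.ReflTransGen.refl
  | @cons u v w P L hr hv hc ih =>
    have hcard : P.card = 1 := h1 (u, P) List.mem_cons_self
    obtain ⟨d, hd⟩ := Multiset.card_eq_one.mp hcard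
    subst hd
    have hvd : v = d := Multiset.mem_singleton.mp hv
    subst hvd
    exact Relation.ReflTransGen.head hr (ih fun p hp => h1 p (List.mem_cons_of_mem _ hp))

/-- If a fast reaction's product is Γ-reachable back to its reactant, it is (1,1). -/
lemma prod_singleton {R : Set (Rxn C)} (h3 : Prop3 R) {a c : C} {P : Multiset C}
    (hr : ((({a} : Multiset C), P) : Rxn C) ∈ R) (hra : Reach R c a) (hcP : c ∈ P) :
    P = {c} := by
  obtain ⟨L, hL⟩ := chain_of_reach hra
  have hcyc : ChainL R a a ((a, P) :: L) := ChainL.cons hr hcP hL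
  have hcard : P.card = 1 :=
    chain_cycle h3 hcyc (List.cons_ne_nil _ _) (a, P) List.mem_cons_self
  obtain ⟨d, hd⟩ := Multiset.card_eq_one.mp hcard
  subst hd
  rw [Multiset.mem_singleton.mp hcP]

/-- The descending relation for the fate recursion: `b` is a product, outside `scc R x`,
of a fast reaction whose reactant lies in `scc R x`. -/
def Below (R : Set (Rxn C)) (b x : C) : Prop :=
  ∃ a P, a ∈ scc R x ∧ ((({a} : Multiset C), P) : Rxn C) ∈ R ∧ b ∈ P ∧ b ∉ scc R x

lemma below_chain {R : Set (Rxn C)} {y x : C} (h : Below R y x) :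
    ∃ L, L ≠ [] ∧ ChainL R x y L := by
  obtain ⟨a, P, ha, hr, hy, _⟩ := h
  obtain ⟨L1, hL1⟩ := chain_of_reach ha.1
  refine ⟨L1 ++ [(a, P)], by simp, ?_⟩
  exact chain_append hL1 (ChainL.cons hr hy (ChainL.nil y))

lemma transgen_chain {R : Set (Rxn C)} {a b : C} (h : Relation.TransGen (Below R) a b) :
    ∃ L, L ≠ [] ∧ ChainL R b a L := by
  induction h with
  | single h => exact below_chain h
  | tail h1 h2 ih =>
    obtain ⟨L1, hL1ne, hL1⟩ := ih
    obtain ⟨L2, hL2ne, hL2⟩ := below_chain h2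
    exact ⟨L2 ++ L1, by simp [hL2ne], chain_append hL2 hL1⟩

lemma transgen_below_irrefl {R : Set (Rxn C)} (h3 : Prop3 R) (x : C) :
    ¬ Relation.TransGen (Below R) x x := by
  intro h
  cases h with
  | single h => exact h.choose_spec.choose_spec.2.2.2 (mem_scc_self R x)
  | tail h1 h2 =>
    rename_i b
    obtain ⟨L1, hL1ne, hL1⟩ := below_chain h2   -- ChainL R x b L1
    obtain ⟨L2, hL2ne, hL2⟩ := transgen_chain h1 -- ChainL R b x L2
    have hcyc : ChainL R x x (L1 ++ L2) := chain_append hL1 hL2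
    have hall := chain_cycle h3 hcyc (by simp [hL1ne])
    have r1 : Reach R x b := chain_reach hL1 fun p hp => hall p (List.mem_append_left _ hp)
    have r2 : Reach R b x := chain_reach hL2 fun p hp => hall p (List.mem_append_right _ hp)
    exact h2.choose_spec.choose_spec.2.2.2 ⟨r1, r2⟩

lemma below_wf {R : Set (Rxn C)} [Finite C] (h3 : Prop3 R) : WellFounded (Below R) := by
  haveI : IsTrans C (Relation.TransGen (Below R)) := ⟨fun a b c => Relation.TransGen.trans⟩
  haveI : IsIrrefl C (Relation.TransGen (Below R)) := ⟨transgen_below_irrefl h3⟩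
  exact Subrelation.wf (fun h => Relation.TransGen.single h)
    (Finite.wellFounded_of_trans_of_irrefl _)

end Aux

/-- If C is finite and Property 3 holds, every complex has at least one fate. -/
theorem exists_fate {C : Type*} [Fintype C] (R : Set (Rxn C))
    (hRfin : R.Finite) (hne : NonemptyRxns R) (h3 : Prop3 R) (x : C) :
    ∃ F : Multiset (Set C), Fate R x F := by
  classical
  have hwf := below_wf (R := R) h3
  refine hwf.induction (C := fun x => ∃ F : Multiset (Set C), Fate R x F) x ?_
  clear x
  intro x ih
  by_cases hres : IsRestingSet R (scc R x)
  · exact ⟨_, Fate.resting x hres⟩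
  · have hne2 : ¬ ∀ r ∈ R, r.1.card = 1 → (∀ a ∈ r.1, a ∈ scc R x) →
        ∀ b ∈ r.2, b ∈ scc R x := fun h => hres ⟨⟨x, rfl⟩, h⟩
    push_neg at hne2
    obtain ⟨r, hrR, hcard, hreac, b, hbP, hbout⟩ := hne2
    obtain ⟨A, P⟩ := r
    obtain ⟨a, ha⟩ := Multiset.card_eq_one.mp hcard
    subst ha
    have haS : a ∈ scc R x := hreac a (Multiset.mem_singleton_self a)
    -- every product lies outside scc R x
    have hout : ∀ c ∈ P, c ∉ scc R x := by
      intro c hc hcS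
      have hra : Reach R c a := hcS.2.trans haS.1
      have hPc : P = {c} := prod_singleton h3 hrR hra hc
      rw [hPc, Multiset.mem_singleton] at hbP
      subst hbP
      exact hbout hcS
    have hbel : ∀ c ∈ P, Below R c x := fun c hc => ⟨a, P, haS, hrR, hc, hout c hc⟩
    set g : C → Multiset (Set C) :=
      fun c => if h : ∃ F, Fate R c F then h.choose else 0 with hg
    have hgspec : ∀ c, (∃ F, Fate R c F) → Fate R c (g c) := by
      intro c h
      rw [hg]
      simp only [dif_pos h]
      exact h.choose_spec
    set l : List (C × Multiset (Set C)) := P.toList.map (fun c => (c, g c)) with hl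
    have hfst : l.map Prod.fst = P.toList := by
      rw [hl, List.map_map]; exact List.map_id _
    refine ⟨(l.map Prod.snd).sum, ?_⟩
    refine Fate.step x a l hres haS ?_ ?_ ?_
    · rw [hfst, Multiset.coe_toList]; exact hrR
    · exact ⟨b, by rw [hfst]; exact Multiset.mem_toList.mpr hbP, hbout⟩
    · intro p hp
      rw [hl] at hp
      simp only [List.mem_map] at hp
      obtain ⟨c, hc, rfl⟩ := hp
      exact hgspec c (ih c (hbel c (Multiset.mem_toList.mp hc)))
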